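/- The Dirichlet–Minkowski forcing DM is σ-soft-linked; moreover, this is witnessed by the sets M_{s,m} = {(t,F) ∈ DM : t = s and |F| ≤ m} for s ∈ ω^{<ω} and m ∈ ω: each M_{s,m} is leaf-linked, their union is dense in DM, and if (t,F) ∈ M_{s,m} and (t',F') ∈ M_{s',m'} are compatible with s ⊆ s', then they have a common extension in M_{s', m+m'}. -/
import Mathlib


universe u

variable {α : Type u} [Preorder α]

/-- `p` and `q` are compatible: some `r` extends both. -/
def Compat (p q : α) : Prop := ∃ r : α, r ≤ p ∧ r ≤ q

/-- `A` is a maximal antichain: pairwise incompatible, and every condition is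
compatible with a member of `A`. -/
def IsMaxAC (A : Set α) : Prop :=
  (∀ p ∈ A, ∀ q ∈ A, p ≠ q → ¬Compat p q) ∧ ∀ p : α, ∃ q ∈ A, Compat p q

/-- `Q` is leaf-linked: for every maximal antichain enumerated as `{p n : n ∈ ω}`
there is `n` such that every `q ∈ Q` is compatible with some `p j`, `j < n`. -/
def LeafLinked (Q : Set α) : Prop :=
  ∀ p : ℕ → α, IsMaxAC (Set.range p) → ∃ n : ℕ, ∀ q ∈ Q, ∃ j < n, Compat q (p j)

/-- `D` is dense in the preorder. -/
def DenseSub (D : Set α) : Prop := ∀ p : α, ∃ q ∈ D, q ≤ p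

/-- The countable chain condition: every antichain is countable. -/
def CCC (α : Type u) [Preorder α] : Prop :=
  ∀ A : Set α, (∀ p ∈ A, ∀ q ∈ A, p ≠ q → ¬Compat p q) → A.Countable

/-- `P` is σ-soft-linked. -/
def SigmaSoftLinked (α : Type u) [Preorder α] : Prop :=
  ∃ Q : ℕ → Set α, (∀ n, LeafLinked (Q n)) ∧ DenseSub (⋃ n, Q n) ∧
    ∀ n n' : ℕ, ∃ k : ℕ, ∀ p ∈ Q n, ∀ q ∈ Q n',
      Compat p q → ∃ r ∈ Q k, r ≤ p ∧ r ≤ q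

/-- `‖x‖`: the distance from `x` to the nearest integer. -/
noncomputable def nid (x : ℝ) : ℝ := |x - round x|

/-- Conditions of the Dirichlet–Minkowski forcing `DM`: pairs `(s, F)` with
`s ∈ ω^{<ω}` and `F` a finite subset of `[0,1]`. -/
def DMCond : Type :=
  {p : List ℕ × Finset ℝ // ∀ x ∈ p.2, x ∈ Set.Icc (0 : ℝ) 1}

/-- The order of `DM`: `(s,F) ≤ (t,H)` iff `t ⊆ s`, `H ⊆ F`, and
`‖s i · x‖ < 1/(i+1)` for every `i ∈ dom(s) ∖ dom(t)` and every `x ∈ H`. -/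
noncomputable instance : Preorder DMCond where
  le p q := q.1.1 <+: p.1.1 ∧ q.1.2 ⊆ p.1.2 ∧
    ∀ (i : ℕ), q.1.1.length ≤ i → ∀ h2 : i < p.1.1.length, ∀ x ∈ q.1.2,
      nid ((p.1.1[i] : ℝ) * x) < 1 / (i + 1)
  le_refl p :=
    ⟨List.prefix_refl _, subset_rfl, fun i h1 h2 => absurd h1 (by omega)⟩
  le_trans p q r hpq hqr := by
    obtain ⟨h1, h2, h3⟩ := hpq
    obtain ⟨h1', h2', h3'⟩ := hqr
    refine ⟨h1'.trans h1, h2'.trans h2, ?_⟩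
    intro i hi1 hi2 x hx
    by_cases hc : i < q.1.1.length
    · have := h3' i hi1 hc x hx
      rwa [h1.getElem hc] at this
    · exact h3 i (by omega) hi2 x (h2' hx)

/-- The set `M_{s,m} = {(t,F) ∈ DM : t = s and |F| ≤ m}`. -/
def DMSet (s : List ℕ) (m : ℕ) : Set DMCond :=
  {p | p.1.1 = s ∧ p.1.2.card ≤ m}


lemma nid_le_abs_sub (a : ℝ) (k : ℤ) : nid a ≤ |a - k| := by
  rcases eq_or_ne k (round a) with rfl | hk
  · simp [nid]
  · have h1 : |a - (round a : ℝ)| ≤ 1/2 := abs_sub_round a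
    have h2 : (1:ℝ) ≤ |(round a : ℝ) - (k : ℝ)| := by
      have hne : round a - k ≠ 0 := sub_ne_zero.mpr (Ne.symm hk)
      have := Int.one_le_abs hne
      calc (1:ℝ) = ((1:ℤ):ℝ) := by norm_num
        _ ≤ ((|round a - k| : ℤ) : ℝ) := by exact_mod_cast this
        _ = |(round a : ℝ) - (k : ℝ)| := by push_cast; ring_nf
    have h3 := abs_sub_le ((round a : ℝ)) a (k : ℝ)
    have h4 : |(round a:ℝ) - a| = |a - (round a:ℝ)| := abs_sub_comm _ _
    unfold nid
    linarith

lemma nid_lip (a b : ℝ) : nid a ≤ |a - b| + nid b :=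
  (nid_le_abs_sub a (round b)).trans (by unfold nid; exact abs_sub_le a b (round b))

/-- Common extension lemma: part 4 of the theorem. -/
lemma DM_common_ext (s s' : List ℕ) (m m' : ℕ) (hss : s <+: s')
    (p : DMCond) (hp : p ∈ DMSet s m) (q : DMCond) (hq : q ∈ DMSet s' m')
    (hc : Compat p q) : ∃ r ∈ DMSet s' (m + m'), r ≤ p ∧ r ≤ q := by
  classical
  obtain ⟨hp1, hp2⟩ := hp
  obtain ⟨hq1, hq2⟩ := hq
  obtain ⟨w, hwp, hwq⟩ := hc
  have hs'w : s' <+: w.1.1 := by rw [← hq1]; exact hwq.1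
  refine ⟨⟨(s', p.1.2 ∪ q.1.2), ?_⟩, ⟨rfl, ?_⟩, ⟨?_, ?_, ?_⟩, ⟨?_, ?_, ?_⟩⟩
  · intro x hx
    rcases Finset.mem_union.mp hx with h | h
    · exact p.2 x h
    · exact q.2 x h
  · exact (Finset.card_union_le _ _).trans (add_le_add hp2 hq2)
  · show p.1.1 <+: s'; rw [hp1]; exact hss
  · exact Finset.subset_union_left
  · intro i hi1 hi2 x hx
    have hi2'' : i < s'.length := hi2
    have hi2' : i < w.1.1.length := lt_of_lt_of_le hi2'' hs'w.length_le
    have := hwp.2.2 i hi1 hi2' x hx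
    rwa [← hs'w.getElem hi2''] at this
  · show q.1.1 <+: s'; rw [hq1]
  · exact Finset.subset_union_right
  · intro i hi1 hi2 x hx
    rw [hq1] at hi1
    have hi2' : i < s'.length := hi2
    omega

open Filter Topology in
/-- Leaf-linkedness of `M_{s,m}`: part 2 of the theorem. -/
lemma DM_leafLinked (s : List ℕ) (m : ℕ) : LeafLinked (DMSet s m) := by
  classical
  intro p hmax
  by_contra hcon
  push_neg at hcon
  choose q hq hq2 using hcon
  -- enumerate the finite sets with padding
  set e : ℕ → Fin (m+1) → ℝ := fun n i => ((q n).1.2.toList).getD i 0 with he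
  have he1 : ∀ n i, e n i ∈ Set.Icc (0:ℝ) 1 := by
    intro n i
    by_cases h : (i : ℕ) < ((q n).1.2.toList).length
    · rw [he]; simp only
      rw [List.getD_eq_getElem _ _ h]
      exact (q n).2 _ (Finset.mem_toList.mp (List.getElem_mem h))
    · rw [he]; simp only
      rw [List.getD_eq_default _ _ (le_of_not_gt h)]
      constructor <;> norm_num
  have he2 : ∀ n, ∀ x ∈ (q n).1.2, ∃ i : Fin (m+1), e n i = x := by
    intro n x hx
    obtain ⟨i, hi, hix⟩ := List.mem_iff_getElem.mp (Finset.mem_toList.mpr hx)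
    have him : i < m + 1 := by
      have := (q n).1.2.length_toList
      have hcard := (hq n).2
      omega
    exact ⟨⟨i, him⟩, by rw [he]; simp only; rw [List.getD_eq_getElem _ _ hi]; exact hix⟩
  -- compactness
  have hcomp : IsCompact (Set.pi Set.univ fun _ : Fin (m+1) => Set.Icc (0:ℝ) 1) :=
    isCompact_univ_pi fun _ => isCompact_Icc
  obtain ⟨y, hy, φ, hφ, hlim⟩ := hcomp.tendsto_subseq (x := e)
    (fun n => by intro i _; exact he1 n i)
  -- the limit condition
  set Q : DMCond := ⟨(s, Finset.image y Finset.univ), by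
    intro x hx
    obtain ⟨i, _, rfl⟩ := Finset.mem_image.mp hx
    exact hy i (Set.mem_univ i)⟩ with hQ
  obtain ⟨pj, ⟨j, rfl⟩, w, hwQ, hwpj⟩ := hmax.2 Q
  have hsL : s <+: w.1.1 := hwQ.1
  have hkey : ∀ i, s.length ≤ i → ∀ hi : i < w.1.1.length, ∀ i' : Fin (m+1),
      nid ((w.1.1[i] : ℝ) * y i') < 1 / (i + 1) := by
    intro i hi1 hi2 i'
    exact hwQ.2.2 i hi1 hi2 (y i') (Finset.mem_image.mpr ⟨i', Finset.mem_univ _, rfl⟩)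
  -- eventual closeness
  have hev : ∀ᶠ n in atTop, ∀ i' : Fin (m+1), ∀ i : Fin w.1.1.length,
      s.length ≤ (i : ℕ) →
        nid ((w.1.1[(i:ℕ)] : ℝ) * e (φ n) i') < 1 / ((i:ℕ) + 1) := by
    rw [eventually_all]
    intro i'
    rw [eventually_all]
    intro i
    by_cases hsi : s.length ≤ (i : ℕ)
    · have hst := hkey (i : ℕ) hsi i.2 i'
      have hδ : (0:ℝ) < 1 / ((i:ℕ) + 1) - nid ((w.1.1[(i:ℕ)] : ℝ) * y i') := by linarith
      have hco : Tendsto (fun n => e (φ n) i') atTop (𝓝 (y i')) :=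
        tendsto_pi_nhds.mp hlim i'
      have h0' : Tendsto (fun n => (w.1.1[(i:ℕ)] : ℝ) * e (φ n) i'
            - (w.1.1[(i:ℕ)] : ℝ) * y i') atTop
          (𝓝 ((w.1.1[(i:ℕ)] : ℝ) * y i' - (w.1.1[(i:ℕ)] : ℝ) * y i')) :=
        (hco.const_mul _).sub tendsto_const_nhds
      rw [sub_self] at h0'
      have h0 : Tendsto (fun n => |(w.1.1[(i:ℕ)] : ℝ) * e (φ n) i'
          - (w.1.1[(i:ℕ)] : ℝ) * y i'|) atTop (𝓝 0) := by
        simpa using h0'.abs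
      filter_upwards [h0.eventually_lt_const hδ] with n hn _
      have := nid_lip ((w.1.1[(i:ℕ)] : ℝ) * e (φ n) i') ((w.1.1[(i:ℕ)] : ℝ) * y i')
      linarith
    · filter_upwards with n hn
      exact absurd hn hsi
  obtain ⟨n, hn1, hn2⟩ := (hev.and (eventually_gt_atTop j)).exists
  have hjn : j < φ n := lt_of_lt_of_le hn2 hφ.le_apply
  refine hq2 (φ n) j hjn ?_
  -- build the witness of compatibility
  have hqs : (q (φ n)).1.1 = s := (hq (φ n)).1
  refine ⟨⟨(w.1.1, w.1.2 ∪ (q (φ n)).1.2), ?_⟩, ⟨?_, ?_, ?_⟩, ?_⟩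
  · intro x hx
    rcases Finset.mem_union.mp hx with h | h
    · exact w.2 x h
    · exact (q (φ n)).2 x h
  · show (q (φ n)).1.1 <+: w.1.1; rw [hqs]; exact hsL
  · exact Finset.subset_union_right
  · intro i hi1 hi2 x hx
    rw [hqs] at hi1
    have hi2' : i < w.1.1.length := hi2
    obtain ⟨i', hi'⟩ := he2 (φ n) x hx
    rw [← hi']
    exact hn1 i' ⟨i, hi2'⟩ hi1
  · -- ≤ p j via w
    refine le_trans (α := DMCond) ?_ hwpj
    refine ⟨List.prefix_refl _, Finset.subset_union_left, ?_⟩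
    intro i h1 h2 x hx
    exfalso
    have h2' : i < w.1.1.length := h2
    omega

/-- σ-soft-linkedness helper: a common index for any pair. -/
lemma DM_link (s : List ℕ) (m : ℕ) (s' : List ℕ) (m' : ℕ) :
    ∃ t : List ℕ × ℕ, ∀ p ∈ DMSet s m, ∀ q ∈ DMSet s' m',
      Compat p q → ∃ r ∈ DMSet t.1 t.2, r ≤ p ∧ r ≤ q := by
  by_cases hc : s <+: s'
  · exact ⟨(s', m + m'), fun p hp q hq hpq => DM_common_ext s s' m m' hc p hp q hq hpq⟩
  · by_cases hc' : s' <+: s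
    · refine ⟨(s, m' + m), fun p hp q hq hpq => ?_⟩
      obtain ⟨w, hw1, hw2⟩ := hpq
      obtain ⟨r, hr1, hr2, hr3⟩ := DM_common_ext s' s m' m hc' q hq p hp ⟨w, hw2, hw1⟩
      exact ⟨r, hr1, hr3, hr2⟩
    · refine ⟨([], 0), fun p hp q hq hpq => ?_⟩
      exfalso
      obtain ⟨w, hwp, hwq⟩ := hpq
      have h1 : s <+: w.1.1 := by rw [← hp.1]; exact hwp.1
      have h2 : s' <+: w.1.1 := by rw [← hq.1]; exact hwq.1
      rcases List.prefix_or_prefix_of_prefix h1 h2 with h | h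
      · exact hc h
      · exact hc' h

/-- The Dirichlet–Minkowski forcing is σ-soft-linked, witnessed by the sets
`M_{s,m}`: each is leaf-linked, their union is dense, and compatible members
of `M_{s,m}` and `M_{s',m'}` with `s ⊆ s'` have a common extension in
`M_{s',m+m'}`. -/
theorem stmt17 :
    SigmaSoftLinked DMCond ∧
    (∀ (s : List ℕ) (m : ℕ), LeafLinked (DMSet s m)) ∧
    DenseSub (⋃ (s : List ℕ) (m : ℕ), DMSet s m) ∧
    ∀ (s s' : List ℕ) (m m' : ℕ), s <+: s' →
      ∀ p ∈ DMSet s m, ∀ q ∈ DMSet s' m',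
        Compat p q → ∃ r ∈ DMSet s' (m + m'), r ≤ p ∧ r ≤ q := by
  classical
  have dense : DenseSub (⋃ (s : List ℕ) (m : ℕ), DMSet s m) := by
    intro p
    exact ⟨p, Set.mem_iUnion.mpr ⟨p.1.1, Set.mem_iUnion.mpr ⟨p.1.2.card, rfl, le_rfl⟩⟩,
      le_refl p⟩
  refine ⟨?_, DM_leafLinked, dense, fun s s' m m' h => DM_common_ext s s' m m' h⟩
  refine ⟨fun k => DMSet ((Denumerable.eqv (List ℕ × ℕ)).symm k).1
      ((Denumerable.eqv (List ℕ × ℕ)).symm k).2,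
    fun k => DM_leafLinked _ _, ?_, ?_⟩
  · intro p
    refine ⟨p, Set.mem_iUnion.mpr ⟨Denumerable.eqv (List ℕ × ℕ) (p.1.1, p.1.2.card), ?_⟩,
      le_refl p⟩
    show p ∈ DMSet ((Denumerable.eqv (List ℕ × ℕ)).symm
      (Denumerable.eqv (List ℕ × ℕ) (p.1.1, p.1.2.card))).1 _
    rw [Equiv.symm_apply_apply]
    exact ⟨rfl, le_rfl⟩
  · intro n n'
    obtain ⟨t, ht⟩ := DM_link ((Denumerable.eqv (List ℕ × ℕ)).symm n).1
      ((Denumerable.eqv (List ℕ × ℕ)).symm n).2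
      ((Denumerable.eqv (List ℕ × ℕ)).symm n').1
      ((Denumerable.eqv (List ℕ × ℕ)).symm n').2
    refine ⟨Denumerable.eqv (List ℕ × ℕ) t, ?_⟩
    intro p hp q hq hpq
    obtain ⟨r, hr1, hr2⟩ := ht p hp q hq hpq
    refine ⟨r, ?_, hr2⟩
    show r ∈ DMSet ((Denumerable.eqv (List ℕ × ℕ)).symm
      (Denumerable.eqv (List ℕ × ℕ) t)).1 _
    rw [Equiv.symm_apply_apply]
    exact hr1
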